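/- A linear map f : M_n(ℂ) → M_m(ℂ) is completely positive if and only if there exist finitely many n×m matrices Vᵢ such that f(A) = Σᵢ Vᵢᴴ A Vᵢ for all A. (Choi's theorem.) -/

import Mathlib

open Matrix
open scoped ComplexOrder

/-- A linear map `f : M_α(ℂ) → M_β(ℂ)` is completely positive if for every `k`
    the map `id_{M_k(ℂ)} ⊗ f` is positive, i.e. it sends positive semidefinite
    elements of `M_k(ℂ) ⊗ M_α(ℂ) ≅ M_{Fin k × α}(ℂ)` to positive semidefinite
    elements of `M_{Fin k × β}(ℂ)`. -/
def IsCompletelyPositive {α β : Type*} [Fintype α] [Fintype β]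
    (f : Matrix α α ℂ →ₗ[ℂ] Matrix β β ℂ) : Prop :=
  ∀ (k : ℕ) (M : Matrix (Fin k × α) (Fin k × α) ℂ), M.PosSemidef →
    (Matrix.of fun (x y : Fin k × β) =>
        f (Matrix.of fun i j => M (x.1, i) (y.1, j)) x.2 y.2).PosSemidef

lemma posSemidef_sum {ι N : Type*} [Fintype N] (s : Finset ι) (F : ι → Matrix N N ℂ)
    (h : ∀ i ∈ s, (F i).PosSemidef) : (∑ i ∈ s, F i).PosSemidef := by
  classical
  induction s using Finset.induction_on with
  | empty => simpa using Matrix.PosSemidef.zero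
  | insert _ _ hni ih =>
    rw [Finset.sum_insert hni]
    exact (h _ (Finset.mem_insert_self _ _)).add
      (ih fun i hi => h i (Finset.mem_insert_of_mem hi))

lemma lin_expand {n m : ℕ} (f : Matrix (Fin n) (Fin n) ℂ →ₗ[ℂ] Matrix (Fin m) (Fin m) ℂ)
    (A : Matrix (Fin n) (Fin n) ℂ) :
    f A = ∑ i, ∑ j, A i j • f (Matrix.single i j 1) := by
  conv_lhs => rw [matrix_eq_sum_single A]
  rw [map_sum]
  refine Finset.sum_congr rfl fun i _ => ?_
  rw [map_sum]
  refine Finset.sum_congr rfl fun j _ => ?_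
  rw [← f.map_smul]
  congr 1
  rw [smul_single, smul_eq_mul, mul_one]

/-- Choi's theorem: a linear map `f : M_n(ℂ) → M_m(ℂ)` is completely positive
    iff `f(A) = Σᵢ Vᵢᴴ A Vᵢ` for finitely many `n×m` matrices `Vᵢ`. -/
theorem choi_characterization (n m : ℕ)
    (f : Matrix (Fin n) (Fin n) ℂ →ₗ[ℂ] Matrix (Fin m) (Fin m) ℂ) :
    IsCompletelyPositive f ↔
      ∃ (t : ℕ) (V : Fin t → Matrix (Fin n) (Fin m) ℂ),
        ∀ A, f A = ∑ i, (V i)ᴴ * A * V i := by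
  constructor
  · -- forward: completely positive → Kraus decomposition
    intro hf
    -- the rank-one projection onto the maximally entangled vector
    set v : (Fin n × Fin n) → ℂ := fun p => if p.1 = p.2 then 1 else 0 with hv
    set M : Matrix (Fin n × Fin n) (Fin n × Fin n) ℂ :=
      Matrix.of (fun p q => v p * star (v q)) with hMdef
    have hM : M.PosSemidef := by
      refine Matrix.posSemidef_iff_dotProduct_mulVec.mpr ⟨?_, ?_⟩
      · ext p q
        simp [hMdef, Matrix.conjTranspose_apply, mul_comm]
      · intro x
        have : star x ⬝ᵥ (M *ᵥ x) = star (star v ⬝ᵥ x) * (star v ⬝ᵥ x) := by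
          simp only [hMdef, Matrix.mulVec, dotProduct, Matrix.of_apply, Pi.star_apply]
          simp only [Finset.mul_sum, Finset.sum_mul, star_sum, star_mul']
          rw [Finset.sum_comm]
          refine Finset.sum_congr rfl fun p _ => Finset.sum_congr rfl fun q _ => ?_
          simp only [star_star]
          ring
        rw [this]
        exact star_mul_self_nonneg _
    have hC := hf n M hM
    -- the Choi matrix
    set C : Matrix (Fin n × Fin m) (Fin n × Fin m) ℂ :=
      Matrix.of fun (x y : Fin n × Fin m) =>
        f (Matrix.of fun i j => M (x.1, i) (y.1, j)) x.2 y.2 with hCdef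
    have hCE : ∀ (i j : Fin n) (x y : Fin m),
        C (i, x) (j, y) = f (Matrix.single i j 1) x y := by
      intro i j x y
      have : (Matrix.of fun a b => M (i, a) (j, b)) = Matrix.single i j (1 : ℂ) := by
        ext a b
        simp only [hMdef, Matrix.of_apply, hv, Matrix.single, Matrix.of_apply]
        by_cases ha : i = a <;> by_cases hb : j = b <;> simp [ha, hb]
      simp only [hCdef, Matrix.of_apply, this]
    obtain ⟨B, hB⟩ : ∃ B : Matrix (Fin n × Fin m) (Fin n × Fin m) ℂ, C = Bᴴ * B := by
      classical
      open scoped MatrixOrder in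
      obtain ⟨X, hX, -, hXC⟩ := CFC.exists_sqrt_of_isSelfAdjoint_of_quasispectrumRestricts
        hC.isHermitian (QuasispectrumRestricts.nnreal_of_nonneg hC.nonneg)
      exact ⟨X, by rw [← hXC, ← Matrix.star_eq_conjTranspose, hX.star_eq]⟩
    refine ⟨n * m, fun s => Matrix.of fun i x => B (finProdFinEquiv.symm s) (i, x), fun A => ?_⟩
    ext x y
    have key : ∀ i j, C (i, x) (j, y) = ∑ p, star (B p (i, x)) * B p (j, y) := by
      intro i j
      rw [hB]
      simp [Matrix.mul_apply, Matrix.conjTranspose_apply]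
    rw [lin_expand f A]
    rw [Matrix.sum_apply, Finset.sum_congr rfl (fun i _ => Matrix.sum_apply _ _ _ _)]
    simp only [Matrix.smul_apply, smul_eq_mul, ← hCE]
    -- RHS
    rw [Matrix.sum_apply]
    rw [← Equiv.sum_comp finProdFinEquiv
      (fun s => ((Matrix.of fun i x => B (finProdFinEquiv.symm s) (i, x))ᴴ * A *
        (Matrix.of fun i x => B (finProdFinEquiv.symm s) (i, x))) x y)]
    simp only [Equiv.symm_apply_apply]
    have rhs : ∀ p : Fin n × Fin m,
        ((Matrix.of fun i x => B p (i, x))ᴴ * A * (Matrix.of fun i x => B p (i, x))) x y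
          = ∑ i, ∑ j, A i j * (star (B p (i, x)) * B p (j, y)) := by
      intro p
      simp only [Matrix.mul_apply, Matrix.conjTranspose_apply, Matrix.of_apply,
        Finset.sum_mul, Finset.mul_sum]
      rw [Finset.sum_comm]
      refine Finset.sum_congr rfl fun i _ => Finset.sum_congr rfl fun j _ => by ring
    simp only [rhs, key, Finset.mul_sum]
    rw [show (∑ p : Fin n × Fin m, ∑ i : Fin n, ∑ j : Fin n,
          A i j * (star (B p (i, x)) * B p (j, y)))
        = ∑ i : Fin n, ∑ p : Fin n × Fin m, ∑ j : Fin n,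
          A i j * (star (B p (i, x)) * B p (j, y)) from Finset.sum_comm]
    exact Finset.sum_congr rfl fun i _ => Finset.sum_comm
  · -- backward: Kraus decomposition → completely positive
    rintro ⟨t, V, hV⟩ k M hM
    set W : Fin t → Matrix (Fin k × Fin n) (Fin k × Fin m) ℂ := fun s =>
      Matrix.of fun p q => if p.1 = q.1 then V s p.2 q.2 else 0 with hW
    have : (Matrix.of fun (x y : Fin k × Fin m) =>
        f (Matrix.of fun i j => M (x.1, i) (y.1, j)) x.2 y.2)
        = ∑ s, (W s)ᴴ * M * W s := by
      ext ⟨a, x⟩ ⟨b, y⟩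
      rw [Matrix.of_apply, hV, Matrix.sum_apply, Matrix.sum_apply]
      congr 1; ext s
      simp only [Matrix.mul_apply, Matrix.conjTranspose_apply, Matrix.of_apply, hW,
        Fintype.sum_prod_type, Finset.sum_mul, Finset.mul_sum]
      simp only [mul_ite, ite_mul, mul_zero, zero_mul, apply_ite (star : ℂ → ℂ), star_zero,
        Finset.sum_ite_irrel, Finset.sum_const_zero,
        Finset.sum_ite_eq, Finset.sum_ite_eq', Finset.mem_univ, if_true]
    rw [this]
    exact posSemidef_sum _ _ fun s _ => hM.conjTranspose_mul_mul_same (W s)
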